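/- Let A be a connected subset of ℝⁿ_∞ and p ∈ ℝⁿ. If for some index i the two opposite sectors S_i^+(p) and S_i^−(p) of the point p both intersect A, but no other sector of p intersects A, then p ∈ A. -/
import Mathlib


/-- The sector `S_i^ε(p)` in `ℝⁿ_∞`: points `q` with `d∞(p,q) = ε(q_i − p_i)`. -/
def sector {n : ℕ} (p : Fin n → ℝ) (i : Fin n) (ε : ℝ) : Set (Fin n → ℝ) :=
  {q | dist p q = ε * (q i - p i)}

lemma exists_sector {n : ℕ} (p q : Fin n → ℝ) (i : Fin n) :
    ∃ j : Fin n, ∃ ε : ℝ, (ε = 1 ∨ ε = -1) ∧ q ∈ sector p j ε := by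
  obtain ⟨j, -, hj⟩ := Finset.exists_mem_eq_sup Finset.univ ⟨i, Finset.mem_univ i⟩
    (fun b => nndist (p b) (q b))
  have hd : dist p q = |q j - p j| := by
    have : dist p q = dist (p j) (q j) := by
      rw [dist_nndist, dist_nndist, nndist_pi_def, hj]
    rw [this, Real.dist_eq, abs_sub_comm]
  rcases le_total (p j) (q j) with h | h
  · exact ⟨j, 1, Or.inl rfl, by simp [sector, hd, abs_of_nonneg (sub_nonneg.2 h)]⟩
  · refine ⟨j, -1, Or.inr rfl, ?_⟩
    simp only [sector, Set.mem_setOf_eq, hd, abs_of_nonpos (sub_nonpos.2 h)]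
    ring

/-- Let `A ⊆ ℝⁿ_∞` be connected and `p ∈ ℝⁿ`. If the two opposite sectors
`S_i^+(p)` and `S_i^−(p)` both meet `A` but no other sector of `p` meets `A`,
then `p ∈ A`. -/
theorem mem_of_opposite_sectors_meet {n : ℕ} (A : Set (Fin n → ℝ)) (p : Fin n → ℝ)
    (i : Fin n) (hA : IsConnected A)
    (hplus : (sector p i 1 ∩ A).Nonempty) (hminus : (sector p i (-1) ∩ A).Nonempty)
    (hother : ∀ j : Fin n, j ≠ i → ∀ ε : ℝ, ε = 1 ∨ ε = -1 → sector p j ε ∩ A = ∅) :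
    p ∈ A := by
  by_contra hp
  set U : Set (Fin n → ℝ) := {q | p i < q i} with hU
  set V : Set (Fin n → ℝ) := {q | q i < p i} with hV
  have hUopen : IsOpen U := isOpen_lt continuous_const (continuous_apply i)
  have hVopen : IsOpen V := isOpen_lt (continuous_apply i) continuous_const
  have hsub : A ⊆ U ∪ V := by
    intro q hq
    obtain ⟨j, ε, hε, hqsec⟩ := exists_sector p q i
    have hji : j = i := by
      by_contra hji
      have := hother j hji ε hε
      exact absurd (Set.mem_inter hqsec hq) (by rw [this]; exact id)
    subst hji
    have hqp : q ≠ p := fun h => hp (h ▸ hq)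
    have hd : 0 < dist p q := dist_pos.2 (Ne.symm hqp)
    rcases hε with rfl | rfl
    · left
      have h1 : dist p q = q j - p j := by simpa [sector] using hqsec
      show p j < q j
      linarith
    · right
      have h1 : dist p q = -(q j - p j) := by simpa [sector, neg_mul] using hqsec
      show q j < p j
      linarith
  have hAU : (A ∩ U).Nonempty := by
    obtain ⟨q, hqs, hqA⟩ := hplus
    refine ⟨q, hqA, ?_⟩
    have hqp : q ≠ p := fun h => hp (h ▸ hqA)
    have hd : 0 < dist p q := dist_pos.2 (Ne.symm hqp)
    have h1 : dist p q = q i - p i := by simpa [sector] using hqs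
    show p i < q i
    linarith
  have hAV : (A ∩ V).Nonempty := by
    obtain ⟨q, hqs, hqA⟩ := hminus
    refine ⟨q, hqA, ?_⟩
    have hqp : q ≠ p := fun h => hp (h ▸ hqA)
    have hd : 0 < dist p q := dist_pos.2 (Ne.symm hqp)
    have h1 : dist p q = -(q i - p i) := by simpa [sector, neg_mul] using hqs
    show q i < p i
    linarith
  obtain ⟨x, -, hxU, hxV⟩ := hA.isPreconnected U V hUopen hVopen hsub hAU hAV
  have h1 : p i < x i := hxU
  have h2 : x i < p i := hxV
  linarith
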